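/- For the action of τ on the affine root lattice V of type Ã_{n−1}: for every integer r ≥ 0 and every 2 ≤ i ≤ n−1, τ(rδ + α_i + α_{i+1} + ⋯ + α_{n−1}) = (r+1)δ + α_{i−1} + α_i + ⋯ + α_{n−1}. -/

import Mathlib

/-! Statement 11: for the action of `τ` on the affine root lattice of type `Ã_{n-1}`:
for every integer `r ≥ 0` and every `2 ≤ i ≤ n-1`,
`τ(rδ + α_i + α_{i+1} + ⋯ + α_{n-1}) = (r+1)δ + α_{i-1} + α_i + ⋯ + α_{n-1}`. -/

/-- The affine root lattice `V = ℤ × (Fin n → ℤ)` of type `Ã_{n-1}`; the first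
coordinate records the coefficient of the basic imaginary root `δ`. -/
abbrev V (n : ℕ) : Type := ℤ × (Fin n → ℤ)

/-- The basic imaginary root `δ = (1, 0)`. -/
def deltaV (n : ℕ) : V n := (1, 0)

/-- The index preceding `i` cyclically (i.e. `i - 1 mod n`). -/
def prevIdx {n : ℕ} (i : Fin n) : Fin n := ⟨((i : ℕ) + (n - 1)) % n, Nat.mod_lt _ i.pos⟩

/-- The simple roots, indexed `0`-based by `Fin n`: writing `f_0, …, f_{n-1}` for the
standard basis of `Fin n → ℤ` (so `e_k = f_{k-1}` in the paper's `1`-based notation),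
`alphaV i = α_i = (0, e_i − e_{i+1}) = (0, f_{i-1} − f_i)` for `1 ≤ i ≤ n-1`, and
`alphaV 0 = α_0 = (1, e_n − e_1) = (1, f_{n-1} − f_0)`. -/
def alphaV {n : ℕ} (i : Fin n) : V n :=
  (if (i : ℕ) = 0 then 1 else 0, Pi.single (prevIdx i) 1 - Pi.single i 1)

/-- The pairing of `x ∈ V` with the coroot `α_i^∨`:
`⟨(r,v), α_i^∨⟩ = v_i − v_{i+1}` for `1 ≤ i ≤ n-1` and `⟨(r,v), α_0^∨⟩ = v_n − v_1`
(in the paper's `1`-based notation). -/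
def coroot {n : ℕ} (i : Fin n) (x : V n) : ℤ := x.2 (prevIdx i) - x.2 i

/-- The reflection `s_i : V → V`, `s_i(x) = x − ⟨x, α_i^∨⟩·α_i`. -/
def sV {n : ℕ} (i : Fin n) (x : V n) : V n := x - coroot i x • alphaV i

/-- `τ = s_{n-1}∘s_{n-2}∘⋯∘s_1∘s_0` acting on `V` (the `foldl` applies `s_0` first). -/
def tauV (n : ℕ) : V n → V n := fun x => (List.finRange n).foldl (fun y i => sV i y) x

/-- `κ = τ^{n-1}` acting on `V`. -/
def kappaV (n : ℕ) : V n → V n := (tauV n)^[n - 1]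

namespace Stmt11Aux

variable {n : ℕ}

lemma prevIdx_pos (k : ℕ) (hk : k < n) (h1 : 1 ≤ k) :
    prevIdx (⟨k, hk⟩ : Fin n) = ⟨k - 1, by omega⟩ := by
  have h : k + (n - 1) = (k - 1) + n := by omega
  simp only [prevIdx, Fin.mk.injEq]
  rw [h, Nat.add_mod_right, Nat.mod_eq_of_lt (by omega)]

lemma prevIdx_zero (hn : 1 ≤ n) :
    prevIdx (⟨0, by omega⟩ : Fin n) = ⟨n - 1, by omega⟩ := by
  simp only [prevIdx, Fin.mk.injEq]
  rw [Nat.zero_add, Nat.mod_eq_of_lt (by omega)]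

/-- sum of alphas from j to n-1 -/
lemma sumAlpha (hn : 3 ≤ n) (j : ℕ) (hj2 : j ≤ n - 1) (hj1 : 1 ≤ j) :
    ∑ k ∈ Finset.univ.filter (fun k : Fin n => j ≤ (k : ℕ)), alphaV k
      = ((0 : ℤ), Pi.single (⟨j - 1, by omega⟩ : Fin n) 1
          - Pi.single (⟨n - 1, by omega⟩ : Fin n) 1) := by
  have key : ∀ m, (∀ (h2 : m ≤ n - 1), 1 ≤ m →
      ∑ k ∈ Finset.univ.filter (fun k : Fin n => m ≤ (k : ℕ)), alphaV k
        = ((0 : ℤ), Pi.single (⟨m - 1, by omega⟩ : Fin n) 1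
            - Pi.single (⟨n - 1, by omega⟩ : Fin n) 1)) := by
    intro m
    by_cases hm : m ≤ n - 1
    · refine Nat.decreasingInduction' (n := n - 1) (P := fun m => ∀ (h2 : m ≤ n - 1), 1 ≤ m →
        ∑ k ∈ Finset.univ.filter (fun k : Fin n => m ≤ (k : ℕ)), alphaV k
          = ((0 : ℤ), Pi.single (⟨m - 1, by omega⟩ : Fin n) 1
              - Pi.single (⟨n - 1, by omega⟩ : Fin n) 1)) ?_ hm ?_
      · -- step
        intro k hk hmk ih h2 h1
        have hfil : Finset.univ.filter (fun t : Fin n => k ≤ (t : ℕ))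
            = insert (⟨k, by omega⟩ : Fin n)
                (Finset.univ.filter (fun t : Fin n => k + 1 ≤ (t : ℕ))) := by
          ext t
          simp [Finset.mem_filter, Fin.ext_iff]
          omega
        rw [hfil, Finset.sum_insert (by simp), ih (by omega) (by omega)]
        rw [alphaV, prevIdx_pos k (by omega) h1]
        have hk0 : ¬ ((k : ℕ) = 0) := by omega
        refine Prod.ext ?_ ?_
        · simp [hk0]
        · show (Pi.single _ 1 - Pi.single _ 1) + (Pi.single _ 1 - Pi.single _ 1) = _
          have : (⟨k + 1 - 1, by omega⟩ : Fin n) = ⟨k, by omega⟩ := by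
            simp [Fin.ext_iff]
          rw [this]
          abel
      · -- base
        intro h2 h1
        have hfil : Finset.univ.filter (fun t : Fin n => n - 1 ≤ (t : ℕ))
            = {(⟨n - 1, by omega⟩ : Fin n)} := by
          ext t
          simp [Finset.mem_filter, Fin.ext_iff]
          omega
        rw [hfil, Finset.sum_singleton, alphaV, prevIdx_pos (n - 1) (by omega) (by omega)]
        refine Prod.ext ?_ rfl
        have : ¬ ((n - 1 : ℕ) = 0) := by omega
        simp [this]
    · intro h2; omega
  exact key j hj2 hj1

/-- partial fold -/
def Ffold (n : ℕ) (x : V n) (j : ℕ) : V n :=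
  ((List.finRange n).take j).foldl (fun y i => sV i y) x

lemma Ffold_zero (x : V n) : Ffold n x 0 = x := rfl

lemma Ffold_full (x : V n) : Ffold n x n = tauV n x := by
  simp [Ffold, tauV, List.take_of_length_le]

lemma Ffold_succ (x : V n) (j : ℕ) (hj : j < n) :
    Ffold n x (j + 1) = sV ⟨j, hj⟩ (Ffold n x j) := by
  have hlen : j < (List.finRange n).length := by simpa using hj
  rw [Ffold, Ffold, ← List.take_concat_get hlen, List.concat_eq_append,
    List.foldl_append, List.getElem_finRange]
  rfl

/-- s_0 applied to (r, f_a - f_{n-1}) with 1 ≤ a ≤ n-2 -/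
lemma sV_zero (hn : 3 ≤ n) (a : ℕ) (ha1 : 1 ≤ a) (ha2 : a ≤ n - 2) (r : ℤ) :
    sV (⟨0, by omega⟩ : Fin n)
        (r, Pi.single (⟨a, by omega⟩ : Fin n) 1 - Pi.single (⟨n - 1, by omega⟩ : Fin n) 1)
      = (r + 1, Pi.single (⟨a, by omega⟩ : Fin n) 1 - Pi.single (⟨0, by omega⟩ : Fin n) 1) := by
  have hprev := prevIdx_zero (n := n) (by omega)
  have hc : coroot (⟨0, by omega⟩ : Fin n)
      (r, Pi.single (⟨a, by omega⟩ : Fin n) 1 - Pi.single (⟨n - 1, by omega⟩ : Fin n) 1)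
      = -1 := by
    simp only [coroot, hprev, Pi.sub_apply, Pi.single_apply, Fin.ext_iff, Fin.val_mk]
    have h1 : ¬ (n - 1 = a) := by omega
    have h2 : ¬ ((0 : ℕ) = a) := by omega
    have h3 : ¬ ((0 : ℕ) = n - 1) := by omega
    simp [h1, h2, h3]
  rw [sV, hc, alphaV, hprev]
  rw [Prod.ext_iff]
  constructor
  · simp
  · simp only [Prod.snd_sub, Prod.smul_snd]
    module

/-- generic move: s_{j+1} on (r, f_a - f_j), a ∉ {j, j+1} -/
lemma sV_move (j a : ℕ) (hj : j + 1 < n) (ha : a < n) (h1 : a ≠ j) (h2 : a ≠ j + 1) (r : ℤ) :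
    sV (⟨j + 1, hj⟩ : Fin n)
        (r, Pi.single (⟨a, ha⟩ : Fin n) 1 - Pi.single (⟨j, by omega⟩ : Fin n) 1)
      = (r, Pi.single (⟨a, ha⟩ : Fin n) 1 - Pi.single (⟨j + 1, hj⟩ : Fin n) 1) := by
  have hprev : prevIdx (⟨j + 1, hj⟩ : Fin n) = ⟨j, by omega⟩ := by
    rw [prevIdx_pos (j + 1) hj (by omega)]; simp only [Fin.mk.injEq]; omega
  have hc : coroot (⟨j + 1, hj⟩ : Fin n)
      (r, Pi.single (⟨a, ha⟩ : Fin n) 1 - Pi.single (⟨j, by omega⟩ : Fin n) 1) = -1 := by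
    simp only [coroot, hprev, Pi.sub_apply, Pi.single_apply, Fin.ext_iff, Fin.val_mk]
    have g1 : ¬ (j = a) := fun h => h1 h.symm
    have g2 : ¬ (j + 1 = a) := fun h => h2 h.symm
    have g3 : ¬ (j + 1 = j) := by omega
    simp [g1, g2, g3]
  rw [sV, hc, alphaV, hprev]
  rw [Prod.ext_iff]
  constructor
  · have h0 : ¬ ((j + 1 : ℕ) = 0) := by omega
    simp [h0]
  · simp only [Prod.snd_sub, Prod.smul_snd]
    module

/-- crossing move: s_{j+1} on (r, f_{j+1} - f_j) -/
lemma sV_cross (j : ℕ) (hj : j + 1 < n) (r : ℤ) :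
    sV (⟨j + 1, hj⟩ : Fin n)
        (r, Pi.single (⟨j + 1, hj⟩ : Fin n) 1 - Pi.single (⟨j, by omega⟩ : Fin n) 1)
      = (r, Pi.single (⟨j, by omega⟩ : Fin n) 1 - Pi.single (⟨j + 1, hj⟩ : Fin n) 1) := by
  have hprev : prevIdx (⟨j + 1, hj⟩ : Fin n) = ⟨j, by omega⟩ := by
    rw [prevIdx_pos (j + 1) hj (by omega)]; simp only [Fin.mk.injEq]; omega
  have hc : coroot (⟨j + 1, hj⟩ : Fin n)
      (r, Pi.single (⟨j + 1, hj⟩ : Fin n) 1 - Pi.single (⟨j, by omega⟩ : Fin n) 1) = -2 := by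
    simp only [coroot, hprev, Pi.sub_apply, Pi.single_apply, Fin.ext_iff, Fin.val_mk]
    have g3 : ¬ (j = j + 1) := by omega
    have g4 : ¬ (j + 1 = j) := by omega
    simp [g3, g4]
  rw [sV, hc, alphaV, hprev]
  rw [Prod.ext_iff]
  constructor
  · have h0 : ¬ ((j + 1 : ℕ) = 0) := by omega
    simp [h0]
  · simp only [Prod.snd_sub, Prod.smul_snd]
    module


lemma traj (hn : 3 ≤ n) (i : ℕ) (hi1 : 2 ≤ i) (hi2 : i ≤ n - 1) (r : ℤ) :
    ∀ j (h1 : 1 ≤ j) (h2 : j ≤ n - 1),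
      Ffold n (r, Pi.single (⟨i - 1, by omega⟩ : Fin n) 1
          - Pi.single (⟨n - 1, by omega⟩ : Fin n) 1) (j + 1)
        = (r + 1, Pi.single (⟨if j < i - 1 then i - 1 else i - 2, by split <;> omega⟩ : Fin n) 1
            - Pi.single (⟨j, by omega⟩ : Fin n) 1) := by
  intro j h1
  induction j, h1 using Nat.le_induction with
  | base =>
    intro h2
    rw [show (1 : ℕ) + 1 = 0 + 1 + 1 from rfl, Ffold_succ _ (0 + 1) (by omega),
      Ffold_succ _ 0 (by omega), Ffold_zero]
    rw [sV_zero hn (i - 1) (by omega) (by omega) r]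
    by_cases hi : i = 2
    · have hA : (⟨i - 1, by omega⟩ : Fin n) = ⟨0 + 1, by omega⟩ := by
        simp only [Fin.mk.injEq]; omega
      rw [hA, sV_cross 0 (by omega) (r + 1)]
      have hB : (⟨(0 : ℕ), by omega⟩ : Fin n)
          = ⟨if 1 < i - 1 then i - 1 else i - 2, by split <;> omega⟩ := by
        simp only [Fin.mk.injEq]
        split <;> omega
      rw [hB]
    · rw [sV_move 0 (i - 1) (by omega) (by omega) (by omega) (by omega) (r + 1)]
      have hB : (⟨i - 1, by omega⟩ : Fin n)
          = ⟨if 1 < i - 1 then i - 1 else i - 2, by split <;> omega⟩ := by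
        simp only [Fin.mk.injEq]
        split <;> omega
      rw [hB]
  | succ j hj ih =>
    intro h2
    rw [show j + 1 + 1 = (j + 1) + 1 from rfl, Ffold_succ _ (j + 1) (by omega),
      ih (by omega)]
    rcases lt_trichotomy (j + 1) (i - 1) with hlt | heq | hgt
    · -- still moving with a = i - 1
      have hifj : (⟨if j < i - 1 then i - 1 else i - 2, by split <;> omega⟩ : Fin n)
          = ⟨i - 1, by omega⟩ := by
        simp only [Fin.mk.injEq]; split <;> omega
      rw [hifj, sV_move j (i - 1) (by omega) (by omega) (by omega) (by omega) (r + 1)]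
      have hB : (⟨i - 1, by omega⟩ : Fin n)
          = ⟨if j + 1 < i - 1 then i - 1 else i - 2, by split <;> omega⟩ := by
        simp only [Fin.mk.injEq]; split <;> omega
      rw [hB]
    · -- crossing step
      have hifj : (⟨if j < i - 1 then i - 1 else i - 2, by split <;> omega⟩ : Fin n)
          = ⟨j + 1, by omega⟩ := by
        simp only [Fin.mk.injEq]; split <;> omega
      rw [hifj, sV_cross j (by omega) (r + 1)]
      have hB : (⟨(j : ℕ), by omega⟩ : Fin n)
          = ⟨if j + 1 < i - 1 then i - 1 else i - 2, by split <;> omega⟩ := by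
        simp only [Fin.mk.injEq]; split <;> omega
      rw [hB]
    · -- moving with a = i - 2
      have hifj : (⟨if j < i - 1 then i - 1 else i - 2, by split <;> omega⟩ : Fin n)
          = ⟨i - 2, by omega⟩ := by
        simp only [Fin.mk.injEq]; split <;> omega
      rw [hifj, sV_move j (i - 2) (by omega) (by omega) (by omega) (by omega) (r + 1)]
      have hB : (⟨i - 2, by omega⟩ : Fin n)
          = ⟨if j + 1 < i - 1 then i - 1 else i - 2, by split <;> omega⟩ := by
        simp only [Fin.mk.injEq]; split <;> omega
      rw [hB]

end Stmt11Aux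

/-- For `r ≥ 0` and `2 ≤ i ≤ n-1`,
`τ(rδ + α_i + ⋯ + α_{n-1}) = (r+1)δ + α_{i-1} + α_i + ⋯ + α_{n-1}`. -/
theorem stmt11 {n : ℕ} (hn : 3 ≤ n) (r : ℤ) (hr : 0 ≤ r)
    (i : ℕ) (hi1 : 2 ≤ i) (hi2 : i ≤ n - 1) :
    tauV n (r • deltaV n + ∑ k ∈ Finset.univ.filter (fun k : Fin n => i ≤ (k : ℕ)), alphaV k)
      = (r + 1) • deltaV n
        + ∑ k ∈ Finset.univ.filter (fun k : Fin n => i - 1 ≤ (k : ℕ)), alphaV k := by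
  have hx : r • deltaV n
      + ∑ k ∈ Finset.univ.filter (fun k : Fin n => i ≤ (k : ℕ)), alphaV k
      = (r, Pi.single (⟨i - 1, by omega⟩ : Fin n) 1
          - Pi.single (⟨n - 1, by omega⟩ : Fin n) 1) := by
    rw [Stmt11Aux.sumAlpha hn i hi2 (by omega)]
    refine Prod.ext ?_ ?_
    · show r • (1 : ℤ) + 0 = r
      simp
    · show r • (0 : Fin n → ℤ) + _ = _
      simp
  have hy : (r + 1) • deltaV n
      + ∑ k ∈ Finset.univ.filter (fun k : Fin n => i - 1 ≤ (k : ℕ)), alphaV k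
      = (r + 1, Pi.single (⟨i - 2, by omega⟩ : Fin n) 1
          - Pi.single (⟨n - 1, by omega⟩ : Fin n) 1) := by
    rw [Stmt11Aux.sumAlpha hn (i - 1) (by omega) (by omega)]
    have hA : (⟨i - 1 - 1, by omega⟩ : Fin n) = (⟨i - 2, by omega⟩ : Fin n) := by
      simp only [Fin.mk.injEq]; omega
    rw [hA]
    refine Prod.ext ?_ ?_
    · show (r + 1) • (1 : ℤ) + 0 = r + 1
      simp
    · show (r + 1) • (0 : Fin n → ℤ) + _ = _
      simp
  have key := Stmt11Aux.traj hn i hi1 hi2 r (n - 1) (by omega) (by omega)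
  rw [show n - 1 + 1 = n from by omega] at key
  have hB : (⟨if n - 1 < i - 1 then i - 1 else i - 2, by split <;> omega⟩ : Fin n)
      = (⟨i - 2, by omega⟩ : Fin n) := by
    simp only [Fin.mk.injEq]; split <;> omega
  rw [hB] at key
  rw [hx, hy, ← Stmt11Aux.Ffold_full]
  exact key
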